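/- Let n ≥ 1 be an integer and let S be a χ²-random variable with n degrees of freedom. Then for every real x > 0 one has Pr[n − S ≥ 2√(n·x)] ≤ e^{−x}. -/

import Mathlib

open MeasureTheory ProbabilityTheory Real
open scoped NNReal ENNReal

lemma log_one_add_ge {u : ℝ} (hu : 0 ≤ u) : u - u ^ 2 / 2 ≤ Real.log (1 + u) := by
  have key : MonotoneOn (fun y : ℝ => Real.log (1 + y) - (y - y ^ 2 / 2)) (Set.Ici 0) := by
    apply monotoneOn_of_deriv_nonneg (convex_Ici 0)
    · apply ContinuousOn.sub
      · exact (Real.continuousOn_log.comp (continuous_const.add continuous_id).continuousOn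
          (fun y hy => by simp only [Set.mem_Ici] at hy; intro h; simp at h; linarith)).congr
          (fun y hy => rfl)
      · fun_prop
    · intro y hy
      rw [interior_Ici] at hy
      have hy' : (0:ℝ) < y := hy
      have h1 : HasDerivAt (fun y : ℝ => Real.log (1 + y) - (y - y ^ 2 / 2))
          ((1 + y)⁻¹ - (1 - y)) y := by
        have hlog : HasDerivAt (fun y : ℝ => Real.log (1 + y)) ((1 + y)⁻¹) y := by
          have := (Real.hasDerivAt_log (by linarith : (1:ℝ) + y ≠ 0)).comp y
            ((hasDerivAt_id y).const_add 1)
          simpa [Function.comp_def] using this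
        have hpoly : HasDerivAt (fun y : ℝ => y - y ^ 2 / 2) (1 - y) y := by
          have := ((hasDerivAt_id y).sub (((hasDerivAt_pow 2 y)).div_const 2))
          simpa [Pi.sub_def] using this
        exact hlog.sub hpoly
      exact h1.differentiableAt.differentiableWithinAt
    · intro y hy
      rw [interior_Ici] at hy
      have hy' : (0:ℝ) < y := hy
      have h1 : HasDerivAt (fun y : ℝ => Real.log (1 + y) - (y - y ^ 2 / 2))
          ((1 + y)⁻¹ - (1 - y)) y := by
        have hlog : HasDerivAt (fun y : ℝ => Real.log (1 + y)) ((1 + y)⁻¹) y := by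
          have := (Real.hasDerivAt_log (by linarith : (1:ℝ) + y ≠ 0)).comp y
            ((hasDerivAt_id y).const_add 1)
          simpa [Function.comp_def] using this
        have hpoly : HasDerivAt (fun y : ℝ => y - y ^ 2 / 2) (1 - y) y := by
          have := ((hasDerivAt_id y).sub (((hasDerivAt_pow 2 y)).div_const 2))
          simpa [Pi.sub_def] using this
        exact hlog.sub hpoly
      rw [h1.deriv]
      have h2 : (1 + y)⁻¹ - (1 - y) = y ^ 2 / (1 + y) := by
        field_simp
        ring
      rw [h2]
      positivity
  have h0 : (0:ℝ) ∈ Set.Ici (0:ℝ) := Set.self_mem_Ici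
  have := key h0 hu hu
  simp only [Real.log_one, add_zero] at this
  linarith [this]


lemma gauss_exp_neg_sq {t : ℝ} (ht : 0 ≤ t) :
    ∫ y, Real.exp (-(t * y ^ 2)) ∂(gaussianReal 0 1) = (Real.sqrt (1 + 2 * t))⁻¹ := by
  rw [gaussianReal_of_var_ne_zero 0 one_ne_zero]
  have hpdf : gaussianPDF 0 1 = fun x => ((Real.toNNReal (gaussianPDFReal 0 1 x) : ℝ≥0) : ℝ≥0∞) :=
    rfl
  rw [hpdf, integral_withDensity_eq_integral_smul
    ((measurable_gaussianPDFReal 0 1).real_toNNReal) _]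
  have heq : ∀ x : ℝ, (Real.toNNReal (gaussianPDFReal 0 1 x)) • Real.exp (-(t * x ^ 2))
      = (Real.sqrt (2 * π))⁻¹ * Real.exp (-(t + 1/2) * x ^ 2) := by
    intro x
    rw [NNReal.smul_def, Real.coe_toNNReal _ (gaussianPDFReal_nonneg 0 1 x)]
    simp only [smul_eq_mul, gaussianPDFReal]
    rw [mul_assoc, ← Real.exp_add]
    simp only [NNReal.coe_one, mul_one, sub_zero]
    congr 2
    ring
  simp_rw [heq]
  rw [integral_const_mul, integral_gaussian]
  rw [← Real.sqrt_inv, ← Real.sqrt_mul (by positivity), ← Real.sqrt_inv]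
  congr 1
  have hπ : (0:ℝ) < π := Real.pi_pos
  field_simp
  ring

/-- **Lower tail bound for the χ² distribution (Laurent–Massart).**
If `S = ∑ i, (G i)²` where `G 1, …, G n` are i.i.d. standard real Gaussians, then for
every `x > 0`, `Pr[n - S ≥ 2√(n x)] ≤ exp (-x)`. -/
theorem chiSq_lower_tail
    {Ω : Type*} [MeasurableSpace Ω] (μ : Measure Ω) [IsProbabilityMeasure μ]
    (n : ℕ) (hn : 1 ≤ n) (G : Fin n → Ω → ℝ)
    (hmeas : ∀ i, Measurable (G i))
    (hgauss : ∀ i, Measure.map (G i) μ = gaussianReal 0 1)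
    (hindep : iIndepFun G μ)
    (S : Ω → ℝ) (hS : ∀ ω, S ω = ∑ i, (G i ω) ^ 2)
    (x : ℝ) (hx : 0 < x) :
    μ {ω | 2 * Real.sqrt (n * x) ≤ (n : ℝ) - S ω} ≤ ENNReal.ofReal (Real.exp (-x)) := by
  have hn0 : (0:ℝ) < (n:ℝ) := by exact_mod_cast hn
  set t : ℝ := Real.sqrt (x / n) with ht_def
  have ht0 : 0 < t := Real.sqrt_pos.mpr (by positivity)
  have ht2 : t ^ 2 = x / n := Real.sq_sqrt (by positivity)
  have hnt2 : (n:ℝ) * t ^ 2 = x := by rw [ht2]; field_simp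
  have hnt : Real.sqrt ((n:ℝ) * x) = (n:ℝ) * t := by
    rw [show (n:ℝ) * x = (n:ℝ) ^ 2 * (x / n) by field_simp, Real.sqrt_mul (by positivity),
      Real.sqrt_sq hn0.le, ht_def]
  set ε : ℝ := 2 * Real.sqrt ((n:ℝ) * x) with hε_def
  -- the summands
  set X : Fin n → Ω → ℝ := fun i ω => 1 - G i ω ^ 2 with hX_def
  have hXmeas : ∀ i, Measurable (X i) := fun i => (measurable_const.sub ((hmeas i).pow_const 2))
  have hXindep : iIndepFun X μ :=
    hindep.comp (fun _ y => 1 - y ^ 2) (fun _ => measurable_const.sub (measurable_id.pow_const 2))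
  -- mgf of each summand
  have hmgf : ∀ i, mgf (X i) μ t = Real.exp t * (Real.sqrt (1 + 2 * t))⁻¹ := by
    intro i
    have hg : Measurable fun y : ℝ => Real.exp (t * (1 - y ^ 2)) :=
      ((measurable_const.sub (measurable_id.pow_const 2)).const_mul t).exp
    have : mgf (X i) μ t = ∫ y, Real.exp (t * (1 - y ^ 2)) ∂(Measure.map (G i) μ) := by
      rw [mgf, integral_map (hmeas i).aemeasurable hg.aestronglyMeasurable]
    rw [this, hgauss i]
    have : ∀ y : ℝ, Real.exp (t * (1 - y ^ 2)) = Real.exp t * Real.exp (-(t * y ^ 2)) := by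
      intro y; rw [← Real.exp_add]; ring_nf
    simp_rw [this]
    rw [integral_const_mul, gauss_exp_neg_sq ht0.le]
  -- the sum equals n - S
  have hsum : ∀ ω, (∑ i, X i) ω = (n:ℝ) - S ω := by
    intro ω
    rw [Finset.sum_apply, hS ω, hX_def]
    simp [Finset.sum_sub_distrib]
  -- integrability
  have hSnn : ∀ ω, 0 ≤ S ω := fun ω => by rw [hS ω]; positivity
  have hSmeas : Measurable S := by
    have hSeq : S = fun ω => ∑ i, G i ω ^ 2 := funext hS
    rw [hSeq]; exact Finset.measurable_sum _ fun i _ => (hmeas i).pow_const 2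
  have hint : Integrable (fun ω => Real.exp (t * (∑ i, X i) ω)) μ := by
    have heq : (fun ω => Real.exp (t * (∑ i, X i) ω))
        = fun ω => Real.exp (t * ((n:ℝ) - S ω)) := by
      funext ω; rw [hsum ω]
    rw [heq]
    refine Integrable.mono' (integrable_const (Real.exp (t * n)))
      (((measurable_const.sub hSmeas).const_mul t).exp.aestronglyMeasurable) ?_
    filter_upwards with ω
    rw [Real.norm_eq_abs, Real.abs_exp, Real.exp_le_exp]
    have := hSnn ω
    nlinarith [ht0.le]
  -- Chernoff
  have hcher := measure_ge_le_exp_mul_mgf (X := ∑ i, X i) (μ := μ) (t := t) ε ht0.le hint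
  rw [hXindep.mgf_sum hXmeas Finset.univ] at hcher
  simp_rw [hmgf] at hcher
  rw [Finset.prod_const, Finset.card_univ, Fintype.card_fin] at hcher
  -- bound the rhs by exp (-x)
  have hsqrt : Real.exp (t - t ^ 2) ≤ Real.sqrt (1 + 2 * t) := by
    have h1 : Real.exp (2 * t - (2 * t) ^ 2 / 2) ≤ 1 + 2 * t := by
      have := log_one_add_ge (u := 2 * t) (by linarith)
      calc Real.exp (2 * t - (2 * t) ^ 2 / 2) ≤ Real.exp (Real.log (1 + 2 * t)) :=
            Real.exp_le_exp.mpr this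
        _ = 1 + 2 * t := Real.exp_log (by linarith)
    have h2 : Real.sqrt (Real.exp (2 * t - (2 * t) ^ 2 / 2)) = Real.exp (t - t ^ 2) := by
      rw [show 2 * t - (2 * t) ^ 2 / 2 = (t - t ^ 2) + (t - t ^ 2) by ring, Real.exp_add,
        Real.sqrt_mul_self (Real.exp_nonneg _)]
    rw [← h2]
    exact Real.sqrt_le_sqrt h1
  have hinv : (Real.sqrt (1 + 2 * t))⁻¹ ≤ Real.exp (t ^ 2 - t) := by
    rw [show t ^ 2 - t = -(t - t ^ 2) by ring, Real.exp_neg]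
    exact inv_anti₀ (Real.exp_pos _) hsqrt
  have hbound : Real.exp (-t * ε) * (Real.exp t * (Real.sqrt (1 + 2 * t))⁻¹) ^ n
      ≤ Real.exp (-x) := by
    calc Real.exp (-t * ε) * (Real.exp t * (Real.sqrt (1 + 2 * t))⁻¹) ^ n
        ≤ Real.exp (-t * ε) * (Real.exp t * Real.exp (t ^ 2 - t)) ^ n := by
          gcongr
      _ = Real.exp (-t * ε + (n : ℕ) * t ^ 2) := by
          rw [← Real.exp_add, show t + (t ^ 2 - t) = t ^ 2 by ring, ← Real.exp_nat_mul,
            ← Real.exp_add]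
      _ = Real.exp (-x) := by
          congr 1
          rw [hε_def, hnt]
          linear_combination -hnt2
  have hset : {ω | 2 * Real.sqrt (↑n * x) ≤ (n : ℝ) - S ω} = {ω | ε ≤ (∑ i, X i) ω} := by
    ext ω
    simp only [Set.mem_setOf_eq, hsum ω, hε_def]
  rw [hset]
  have hfin : μ {ω | ε ≤ (∑ i, X i) ω} ≠ ⊤ := measure_ne_top _ _
  rw [← ENNReal.ofReal_toReal hfin]
  exact ENNReal.ofReal_le_ofReal (hcher.trans hbound)
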